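/- Given finitely many positive real numbers L_1,...,L_k, there exist positive real numbers l_1,...,l_m that are linearly independent over ℚ such that each L_i is a linear combination of l_1,...,l_m with nonnegative integer coefficients. -/

import Mathlib

open Finset

lemma elim_one_neg {m : ℕ} (l : Fin m → ℝ) (hl : ∀ j, 0 < l j) (a : Fin m → ℤ)
    (hx : 0 < ∑ j, (a j : ℝ) * l j) (n : Fin m) (hn : a n < 0) :
    ∃ (l'' : Fin m → ℝ) (a' : Fin m → ℤ),
      (∀ j, 0 < l'' j) ∧
      (∀ j, ∃ c : Fin m → ℕ, l j = ∑ j', (c j' : ℝ) * l'' j') ∧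
      (∑ j, (a j : ℝ) * l j = ∑ j, (a' j : ℝ) * l'' j) ∧
      0 ≤ a' n ∧ (∀ j, j ≠ n → a' j = a j) := by
  classical
  set x : ℝ := ∑ j, (a j : ℝ) * l j with hxdef
  set S : ℝ := ∑ j, (max (a j) 0 : ℤ) * l j with hSdef
  set b : ℤ := -a n with hbdef
  have hb : (0:ℝ) < (b:ℝ) := by exact_mod_cast Int.neg_pos.mpr hn
  have hterm : ∀ j, 0 ≤ ((max (a j) 0 : ℤ) - a j : ℝ) * l j := by
    intro j
    apply mul_nonneg _ (hl j).le
    push_cast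
    simp [le_max_iff]
  have hSx : x + (b : ℝ) * l n ≤ S := by
    have h1 : ((max (a n) 0 : ℤ) - a n : ℝ) * l n ≤ ∑ j, ((max (a j) 0 : ℤ) - a j : ℝ) * l j :=
      Finset.single_le_sum (fun j _ => hterm j) (mem_univ n)
    have h2 : (max (a n) 0 : ℤ) = 0 := by omega
    rw [h2] at h1
    have h3 : (∑ j, ((max (a j) 0 : ℤ) - a j : ℝ) * l j) = S - x := by
      rw [hSdef, hxdef, ← Finset.sum_sub_distrib]
      congr 1; ext j; push_cast; ring
    rw [h3] at h1
    push_cast at h1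
    have hbcast : (b:ℝ) = -(a n : ℝ) := by rw [hbdef]; push_cast; ring
    rw [hbcast]
    linarith [h1]
  have hbln : (b:ℝ) * l n < S := by nlinarith [hl n]
  have hSpos : 0 < S := by nlinarith [hl n]
  -- choose M
  have hne : (univ : Finset (Fin m)).Nonempty := ⟨n, mem_univ n⟩
  set ε : ℝ := univ.inf' hne l with hεdef
  have hε : 0 < ε := by
    obtain ⟨j, _, hj⟩ := Finset.exists_mem_eq_inf' hne l
    rw [hεdef, hj]; exact hl j
  have hεle : ∀ j, ε ≤ l j := fun j => Finset.inf'_le l (mem_univ j)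
  set r : ℝ := (l n * S) / (S - (b:ℝ) * l n) with hrdef
  have hr : 0 < r := div_pos (mul_pos (hl n) hSpos) (by linarith)
  obtain ⟨M, hM⟩ := exists_nat_gt (r / ε)
  have hM0 : (0:ℝ) < M := lt_trans (div_pos hr hε) hM
  have hMkey : ∀ j, l n * S < (M:ℝ) * (l j * (S - (b:ℝ) * l n)) := by
    intro j
    have h1 : r / l j ≤ r / ε := by
      apply div_le_div_of_nonneg_left hr.le hε (hεle j)
    have h2 : r / l j < M := lt_of_le_of_lt h1 hM
    have h3 : r < (M:ℝ) * l j := by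
      rw [div_lt_iff₀ (hl j)] at h2; linarith [h2]
    rw [hrdef, div_lt_iff₀ (by linarith : (0:ℝ) < S - (b:ℝ)*l n)] at h3
    nlinarith
  set t : Fin m → ℕ := fun j => ⌈((M:ℝ) * b * l j) / S⌉₊ with htdef
  set t' : Fin m → ℕ := fun j => if 0 < a j then t j else 0 with ht'def
  have ht'n : t' n = 0 := by simp [ht'def, not_lt.mpr hn.le]
  -- key bound : for j ≠ n, (t' j) * l n < M * l j
  have hbound : ∀ j, (t' j : ℝ) * l n < (M:ℝ) * l j := by
    intro j
    by_cases haj : 0 < a j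
    · have h1 : (t j : ℝ) < ((M:ℝ) * b * l j) / S + 1 :=
        Nat.ceil_lt_add_one (div_nonneg (mul_nonneg (mul_nonneg hM0.le hb.le) (hl j).le) hSpos.le)
      have h2 : t' j = t j := if_pos haj
      rw [h2]
      have h3 := hMkey j
      have h4 : ((M:ℝ) * b * l j) / S * l n + l n ≤ (M:ℝ) * l j := by
        rw [div_mul_eq_mul_div, div_add' _ _ _ hSpos.ne', div_le_iff₀ hSpos]
        nlinarith
      nlinarith [hl n]
    · have h2 : t' j = 0 := if_neg haj
      rw [h2, Nat.cast_zero, zero_mul]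
      exact mul_pos hM0 (hl j)
  set T : ℤ := ∑ j, a j * (t' j : ℤ) with hTdef
  have hTge : (M:ℝ) * b ≤ (T:ℝ) := by
    have key : ∀ j, ((M:ℝ) * b / S) * ((max (a j) 0 : ℤ) * l j) ≤ (a j : ℝ) * (t' j : ℝ) := by
      intro j
      by_cases haj : 0 < a j
      · have h2 : t' j = t j := if_pos haj
        have h3 : ((M:ℝ) * b * l j) / S ≤ (t j : ℝ) := Nat.le_ceil _
        have h4 : (max (a j) 0 : ℤ) = a j := by omega
        rw [h2, h4]
        have haj' : (0:ℝ) < (a j : ℝ) := by exact_mod_cast haj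
        calc ((M:ℝ) * b / S) * ((a j : ℝ) * l j) = (a j : ℝ) * (((M:ℝ) * b * l j) / S) := by ring
        _ ≤ (a j : ℝ) * (t j : ℝ) := by
            apply mul_le_mul_of_nonneg_left h3 haj'.le
      · have h2 : t' j = 0 := if_neg haj
        have h4 : (max (a j) 0 : ℤ) = 0 := by omega
        rw [h2, h4]; simp
    have hsum : ∑ j, ((M:ℝ) * b / S) * ((max (a j) 0 : ℤ) * l j) ≤ ∑ j, (a j : ℝ) * (t' j : ℝ) :=
      Finset.sum_le_sum (fun j _ => key j)
    rw [← Finset.mul_sum, ← hSdef] at hsum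
    rw [div_mul_cancel₀ _ hSpos.ne'] at hsum
    calc (M:ℝ) * b ≤ ∑ j, (a j : ℝ) * (t' j : ℝ) := hsum
    _ = (T : ℝ) := by rw [hTdef]; push_cast; ring_nf
  have hTgeZ : (M:ℤ) * b ≤ T := by exact_mod_cast hTge
  -- construct
  set l'' : Fin m → ℝ := fun j => if j = n then l n / M else l j - (t' j : ℝ) * l n / M
    with hl''def
  set a' : Fin m → ℤ := fun j => if j = n then T + a n * M else a j with ha'def
  refine ⟨l'', a', ?_, ?_, ?_, ?_, ?_⟩
  · intro j
    by_cases hj : j = n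
    · have : l'' j = l n / M := by rw [hl''def]; simp [hj]
      rw [this]; exact div_pos (hl n) hM0
    · simp only [hl''def, if_neg hj]
      have := hbound j
      rw [sub_pos, div_lt_iff₀ hM0]
      nlinarith
  · intro j
    by_cases hj : j = n
    · refine ⟨fun j' => if j' = n then M else 0, ?_⟩
      subst hj
      rw [Finset.sum_eq_single j]
      · have : l'' j = l j / M := by rw [hl''def]; simp
        rw [this]
        field_simp
        simp
      · intro j' _ hj'; simp [if_neg hj']
      · simp
    · refine ⟨fun j' => if j' = j then 1 else if j' = n then t' j else 0, ?_⟩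
      have hsplit : ∀ j', ((if j' = j then 1 else if j' = n then t' j else 0 : ℕ) : ℝ) * l'' j'
          = (if j' = j then l'' j' else 0) + (if j' = n then (t' j : ℝ) * l'' j' else 0) := by
        intro j'
        by_cases h1 : j' = j
        · subst h1; rw [if_pos rfl, if_pos rfl, if_neg hj]; simp
        · by_cases h2 : j' = n
          · subst h2; rw [if_neg h1, if_pos rfl, if_neg h1, if_pos rfl]; push_cast; ring
          · rw [if_neg h1, if_neg h2, if_neg h1, if_neg h2]; simp
      simp_rw [hsplit]
      rw [Finset.sum_add_distrib, Finset.sum_ite_eq' univ j, Finset.sum_ite_eq' univ n]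
      simp only [mem_univ, if_pos]
      rw [hl''def]
      simp only [if_neg hj, if_pos rfl]
      field_simp
      have hMl : (M:ℝ) * (l n / M) = l n := by field_simp [hM0.ne']
      rw [if_pos trivial]
      linear_combination (-(t' j:ℝ)) * hMl
  · -- sum identity
    have e1 : ∑ j, (a j : ℝ) * l j = (a n : ℝ) * l n + ∑ j ∈ univ.erase n, (a j : ℝ) * l j :=
      (Finset.add_sum_erase _ _ (mem_univ n)).symm
    have e2 : ∑ j, (a' j : ℝ) * l'' j
        = (a' n : ℝ) * l'' n + ∑ j ∈ univ.erase n, (a' j : ℝ) * l'' j :=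
      (Finset.add_sum_erase _ _ (mem_univ n)).symm
    rw [← hxdef] at e1
    rw [e2]
    have e3 : ∑ j ∈ univ.erase n, (a' j : ℝ) * l'' j
        = ∑ j ∈ univ.erase n, ((a j : ℝ) * l j - (a j : ℝ) * (t' j : ℝ) * l n / M) := by
      apply Finset.sum_congr rfl
      intro j hj
      have hjn : j ≠ n := (Finset.mem_erase.mp hj).1
      rw [ha'def, hl''def]
      simp only [if_neg hjn]
      ring
    have e4 : ∑ j ∈ univ.erase n, ((a j : ℝ) * (t' j : ℝ)) = (T:ℝ) := by
      rw [hTdef]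
      push_cast
      rw [← Finset.add_sum_erase _ (fun j => (a j : ℝ) * (t' j : ℝ)) (mem_univ n)]
      rw [ht'n]
      simp
    rw [e3, Finset.sum_sub_distrib]
    have e5 : ∑ j ∈ univ.erase n, (a j : ℝ) * (t' j : ℝ) * l n / M
        = (T:ℝ) * l n / M := by
      rw [← e4, Finset.sum_mul, Finset.sum_div]
    rw [e5]
    have e6 : (a' n : ℝ) = (T:ℝ) + (a n : ℝ) * M := by
      have : a' n = T + a n * M := by rw [ha'def]; simp
      rw [this]; push_cast; ring
    have e7 : l'' n = l n / M := by rw [hl''def]; simp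
    rw [e6, e7, e1]
    field_simp
    ring
  · have h1 : a' n = T + a n * M := by rw [ha'def]; simp
    have h2 : (M:ℤ) * b = -(a n * M) := by rw [hbdef]; ring
    rw [h1]; linarith [hTgeZ]
  · intro j hj; rw [ha'def]; simp [if_neg hj]

lemma natCombo_trans' {m m' : ℕ} {l : Fin m → ℝ} {l' : Fin m' → ℝ} {y : ℝ}
    (h1 : ∃ c : Fin m → ℕ, y = ∑ j, (c j : ℝ) * l j)
    (h2 : ∀ j, ∃ d : Fin m' → ℕ, l j = ∑ j', (d j' : ℝ) * l' j') :
    ∃ c' : Fin m' → ℕ, y = ∑ j', (c' j' : ℝ) * l' j' := by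
  obtain ⟨c, hc⟩ := h1
  choose d hd using h2
  refine ⟨fun j' => ∑ j, c j * d j j', ?_⟩
  rw [hc]
  simp_rw [hd, Finset.mul_sum]
  rw [Finset.sum_comm]
  push_cast
  simp_rw [Finset.sum_mul]
  ring_nf

lemma elim_nonneg {m : ℕ} (l : Fin m → ℝ) (hl : ∀ j, 0 < l j) (a : Fin m → ℤ)
    (hpos : ∀ j, 0 ≤ a j) :
    ∃ l' : Fin m → ℝ, (∀ j, 0 < l' j) ∧
      (∀ j, ∃ c : Fin m → ℕ, l j = ∑ j', (c j' : ℝ) * l' j') ∧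
      ∃ c : Fin m → ℕ, ∑ j, (a j : ℝ) * l j = ∑ j', (c j' : ℝ) * l' j' := by
  refine ⟨l, hl, fun j => ⟨fun j' => if j' = j then 1 else 0, ?_⟩,
    fun j => (a j).toNat, ?_⟩
  · rw [Finset.sum_eq_single j]
    · simp
    · intro j' _ hj'; simp [if_neg hj']
    · simp
  · apply Finset.sum_congr rfl
    intro j _
    have h := Int.toNat_of_nonneg (hpos j)
    congr 1
    exact_mod_cast h.symm

lemma elim_all_neg : ∀ (N m : ℕ) (l : Fin m → ℝ), (∀ j, 0 < l j) → ∀ (a : Fin m → ℤ),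
    (univ.filter fun j => a j < 0).card ≤ N → 0 < ∑ j, (a j : ℝ) * l j →
    ∃ l' : Fin m → ℝ, (∀ j, 0 < l' j) ∧
      (∀ j, ∃ c : Fin m → ℕ, l j = ∑ j', (c j' : ℝ) * l' j') ∧
      ∃ c : Fin m → ℕ, ∑ j, (a j : ℝ) * l j = ∑ j', (c j' : ℝ) * l' j' := by
  intro N
  induction N with
  | zero =>
    intro m l hl a hcard hx
    apply elim_nonneg l hl a
    intro j
    by_contra h
    have hm : j ∈ univ.filter fun j => a j < 0 := by simp; omega
    have := Finset.card_pos.mpr ⟨j, hm⟩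
    omega
  | succ N ih =>
    intro m l hl a hcard hx
    by_cases hneg : ∃ n, a n < 0
    · obtain ⟨n, hn⟩ := hneg
      obtain ⟨l'', a', hl''pos, hcombo, hsum, ha'n, ha'eq⟩ := elim_one_neg l hl a hx n hn
      have hcard' : (univ.filter fun j => a' j < 0).card ≤ N := by
        have hsub : (univ.filter fun j => a' j < 0) ⊆ (univ.filter fun j => a j < 0).erase n := by
          intro j hj
          simp only [mem_filter, mem_univ, true_and] at hj
          have hjn : j ≠ n := by rintro rfl; omega
          rw [Finset.mem_erase]
          refine ⟨hjn, ?_⟩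
          simp only [mem_filter, mem_univ, true_and]
          rw [← ha'eq j hjn]; exact hj
        have hmem : n ∈ univ.filter fun j => a j < 0 := by simp [hn]
        calc (univ.filter fun j => a' j < 0).card
            ≤ ((univ.filter fun j => a j < 0).erase n).card := Finset.card_le_card hsub
          _ = (univ.filter fun j => a j < 0).card - 1 := Finset.card_erase_of_mem hmem
          _ ≤ N := by omega
      have hx' : 0 < ∑ j, (a' j : ℝ) * l'' j := by rw [← hsum]; exact hx
      obtain ⟨l', hl'pos, hcombo', hc'⟩ := ih m l'' hl''pos a' hcard' hx'
      refine ⟨l', hl'pos, fun j => natCombo_trans' (hcombo j) hcombo', ?_⟩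
      rw [hsum]
      exact hc'
    · push_neg at hneg
      exact elim_nonneg l hl a hneg

lemma insert_one {m : ℕ} (l : Fin m → ℝ) (hl : ∀ j, 0 < l j)
    (hli : LinearIndependent ℚ l) (x : ℝ) (hx : 0 < x) :
    ∃ (m' : ℕ) (l' : Fin m' → ℝ), (∀ j, 0 < l' j) ∧ LinearIndependent ℚ l' ∧
      (∀ j, ∃ c : Fin m' → ℕ, l j = ∑ j', (c j' : ℝ) * l' j') ∧
      (∃ c : Fin m' → ℕ, x = ∑ j', (c j' : ℝ) * l' j') := by
  classical
  by_cases hmem : x ∈ Submodule.span ℚ (Set.range l)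
  · -- x is in the span : clear denominators and eliminate negatives
    rw [Finsupp.mem_span_range_iff_exists_finsupp] at hmem
    obtain ⟨q0, hq0⟩ := hmem
    set q : Fin m → ℚ := fun j => q0 j with hqdef
    have hq : ∑ j, (q j) • l j = x := by
      rw [← hq0, Finsupp.sum_fintype]
      simp
    set D : ℕ := ∏ j, (q j).den with hDdef
    have hD : 0 < D := Finset.prod_pos (fun j _ => (q j).pos)
    have hD' : (D:ℝ) ≠ 0 := Nat.cast_ne_zero.mpr hD.ne'
    set aa : Fin m → ℤ := fun j => (q j).num * ((D / (q j).den : ℕ) : ℤ) with haadef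
    have haq : ∀ j, (aa j : ℚ) = q j * D := by
      intro j
      have hdvd : (q j).den ∣ D := Finset.dvd_prod_of_mem _ (mem_univ j)
      have h1 : ((q j).den : ℚ) * ((D / (q j).den : ℕ) : ℚ) = (D:ℚ) := by
        exact_mod_cast congrArg (fun n : ℕ => (n : ℚ)) (Nat.mul_div_cancel' hdvd)
      have hden : ((q j).den : ℚ) ≠ 0 := Nat.cast_ne_zero.mpr (q j).den_nz
      have h2 : (q j) * ((q j).den : ℚ) = ((q j).num : ℚ) := by
        nth_rewrite 1 [← Rat.num_div_den (q j)]
        rw [div_mul_cancel₀ _ hden]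
      have h4 : aa j = (q j).num * ((D / (q j).den : ℕ) : ℤ) := rfl
      rw [h4, Int.cast_mul, Int.cast_natCast, ← h2, mul_assoc, h1]
    have hx2 : x = ∑ j, (aa j : ℝ) * (l j / D) := by
      rw [← hq]
      apply Finset.sum_congr rfl
      intro j _
      have h3 : (aa j : ℝ) = (q j : ℝ) * (D : ℝ) := by
        exact_mod_cast congrArg (fun r : ℚ => (r : ℝ)) (haq j)
      rw [Rat.smul_def, h3]
      field_simp
    have hlDpos : ∀ j, 0 < l j / D := fun j => div_pos (hl j) (by exact_mod_cast hD)
    obtain ⟨l', hl'pos, hcombo, hxc⟩ := elim_all_neg _ m (fun j => l j / D) hlDpos aa le_rfl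
      (by rw [← hx2]; exact hx)
    have hlD : ∀ j, ∃ c : Fin m → ℕ, l j = ∑ j', (c j' : ℝ) * (l j' / D) := by
      intro j
      refine ⟨fun j' => if j' = j then D else 0, ?_⟩
      rw [Finset.sum_eq_single j]
      · simp only [if_pos rfl]
        field_simp
        simp
      · intro j' _ h; simp [if_neg h]
      · simp
    have hcomboL : ∀ j, ∃ c : Fin m → ℕ, l j = ∑ j', (c j' : ℝ) * l' j' :=
      fun j => natCombo_trans' (hlD j) hcombo
    -- linear independence of l' via dimension count
    have hmem' : ∀ j, l j ∈ Submodule.span ℚ (Set.range l') := by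
      intro j
      obtain ⟨c, hc⟩ := hcomboL j
      rw [hc]
      refine Submodule.sum_mem _ fun j' _ => ?_
      have h5 : ((c j' : ℝ)) * l' j' = ((c j' : ℚ)) • l' j' := by
        rw [Rat.smul_def]; norm_num
      rw [h5]
      exact Submodule.smul_mem _ _ (Submodule.subset_span ⟨j', rfl⟩)
    have hle : Submodule.span ℚ (Set.range l) ≤ Submodule.span ℚ (Set.range l') :=
      Submodule.span_le.mpr (by rintro _ ⟨j, rfl⟩; exact hmem' j)
    haveI : FiniteDimensional ℚ (Submodule.span ℚ (Set.range l')) :=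
      FiniteDimensional.span_of_finite ℚ (Set.finite_range l')
    have e1 : Module.finrank ℚ (Submodule.span ℚ (Set.range l)) = m := by
      rw [finrank_span_eq_card hli, Fintype.card_fin]
    have e2 : Module.finrank ℚ (Submodule.span ℚ (Set.range l))
        ≤ Module.finrank ℚ (Submodule.span ℚ (Set.range l')) :=
      Submodule.finrank_mono hle
    have e3 : (Set.range l').finrank ℚ ≤ m := by
      simpa using finrank_range_le_card l'
    have hind : LinearIndependent ℚ l' := by
      rw [linearIndependent_iff_card_eq_finrank_span]
      have e4 : (Set.range l').finrank ℚ = Module.finrank ℚ (Submodule.span ℚ (Set.range l')) :=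
        rfl
      rw [Fintype.card_fin]
      omega
    refine ⟨m, l', hl'pos, hind, hcomboL, ?_⟩
    obtain ⟨c, hc⟩ := hxc
    exact ⟨c, by rw [hx2, hc]⟩
  · -- x is not in the span : just add it
    refine ⟨m + 1, Fin.cons x l, ?_, ?_, ?_, ?_⟩
    · intro j
      refine Fin.cases ?_ ?_ j
      · simpa using hx
      · intro i; simpa using hl i
    · exact linearIndependent_fin_cons.mpr ⟨hli, hmem⟩
    · intro j
      refine ⟨fun j' => if j' = j.succ then 1 else 0, ?_⟩
      rw [Finset.sum_eq_single j.succ]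
      · simp
      · intro j' _ h; simp [if_neg h]
      · simp
    · refine ⟨fun j' => if j' = 0 then 1 else 0, ?_⟩
      rw [Finset.sum_eq_single 0]
      · simp
      · intro j' _ h; simp [if_neg h]
      · simp

/-- Given positive reals `L 1, ..., L k`, there exist positive reals
`l 1, ..., l m`, linearly independent over `ℚ`, such that each `L i` is a
linear combination of the `l j` with nonnegative integer coefficients. -/
theorem exists_rationally_independent_basis {k : ℕ} (L : Fin k → ℝ)
    (hL : ∀ i, 0 < L i) :
    ∃ (m : ℕ) (l : Fin m → ℝ),
      (∀ j, 0 < l j) ∧ LinearIndependent ℚ l ∧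
      ∀ i, ∃ c : Fin m → ℕ, L i = ∑ j, (c j : ℝ) * l j := by
  induction k with
  | zero => exact ⟨0, Fin.elim0, fun j => j.elim0, linearIndependent_empty_type, fun i => i.elim0⟩
  | succ k ih =>
    obtain ⟨m, l, hlp, hli, hrep⟩ := ih (fun i => L i.succ) (fun i => hL i.succ)
    obtain ⟨m', l', h1, h2, h3, h4⟩ := insert_one l hlp hli (L 0) (hL 0)
    refine ⟨m', l', h1, h2, ?_⟩
    intro i
    refine Fin.cases ?_ ?_ i
    · exact h4
    · intro i
      exact natCombo_trans' (hrep i) h3
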